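/- For every integer n ≥ 2, the discriminant of the power basis 1, x, x², …, x^{n−1} of the ℚ-algebra ℚ[X]/(X^n − X − 1) (where x denotes the class of X) equals (−1)^{(n−1)(n−2)/2} · (n^n − (1−n)^{n−1}). -/

import Mathlib

open Polynomial

lemma norm_gen_add_algebraMap {K L : Type*} [Field K] [Field L] [Algebra K L]
    (pb : PowerBasis K L) (c : K) :
    Algebra.norm K (pb.gen + algebraMap K L c)
      = (-1) ^ pb.dim * (minpoly K pb.gen).eval (-c) := by
  have hint : IsIntegral K (pb.gen + algebraMap K L c) :=
    pb.isIntegral_gen.add isIntegral_algebraMap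
  have hmem : pb.gen ∈ Algebra.adjoin K ({pb.gen + algebraMap K L c} : Set L) := by
    have h1 : pb.gen + algebraMap K L c ∈
        Algebra.adjoin K ({pb.gen + algebraMap K L c} : Set L) :=
      Algebra.self_mem_adjoin_singleton K _
    have h2 : algebraMap K L c ∈
        Algebra.adjoin K ({pb.gen + algebraMap K L c} : Set L) :=
      Subalgebra.algebraMap_mem _ c
    simpa using sub_mem h1 h2
  let pb' := PowerBasis.ofAdjoinEqTop' hint (PowerBasis.adjoin_eq_top_of_gen_mem_adjoin hmem)
  have hgen : pb'.gen = pb.gen + algebraMap K L c := by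
    simp [pb', PowerBasis.ofAdjoinEqTop'_gen]
  have hmp : minpoly K pb'.gen = (minpoly K pb.gen).comp (X - C c) := by
    rw [hgen, minpoly.add_algebraMap]
  have hdim : pb'.dim = pb.dim := by
    rw [← pb'.natDegree_minpoly, hmp, natDegree_comp, natDegree_X_sub_C, mul_one,
      pb.natDegree_minpoly]
  calc Algebra.norm K (pb.gen + algebraMap K L c) = Algebra.norm K pb'.gen := by rw [hgen]
    _ = (-1) ^ pb'.dim * coeff (minpoly K pb'.gen) 0 :=
        Algebra.PowerBasis.norm_gen_eq_coeff_zero_minpoly pb'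
    _ = (-1) ^ pb.dim * (minpoly K pb.gen).eval (-c) := by
        rw [hdim, hmp]
        simp [coeff_zero_eq_eval_zero, eval_comp]

/-- For every integer `n ≥ 2`, the discriminant of the power basis `1, x, …, x^{n-1}`
of `ℚ[X]/(X^n - X - 1)` equals `(-1)^{(n-1)(n-2)/2} · (n^n - (1-n)^{n-1})`. -/
theorem discr_powerBasis_adjoinRoot (n : ℕ) (hn : 2 ≤ n)
    (hf : (X ^ n - X - 1 : ℚ[X]) ≠ 0) :
    Algebra.discr ℚ ⇑(AdjoinRoot.powerBasis hf).basis
      = (-1) ^ ((n - 1) * (n - 2) / 2) * ((n : ℚ) ^ n - (1 - (n : ℚ)) ^ (n - 1)) := by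
  set f : ℚ[X] := X ^ n - X - 1 with hfdef
  have hirr : Irreducible f := X_pow_sub_X_sub_one_irreducible_rat (by omega)
  haveI : Fact (Irreducible f) := ⟨hirr⟩
  have hmonic : f.Monic := by
    have h1 : f = X ^ n - (X + 1) := by ring
    rw [h1]
    refine (monic_X_pow n).sub_of_left ?_
    rw [degree_X_pow]
    calc degree (X + 1 : ℚ[X]) ≤ 1 := by
          simpa using degree_add_le (X : ℚ[X]) 1
      _ < (n : WithBot ℕ) := by exact_mod_cast (by omega : 1 < n)
  have hdeg : f.natDegree = n := by
    have h1 : f = X ^ n - (X + 1) := by ring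
    rw [h1, natDegree_sub_eq_left_of_natDegree_lt]
    · exact natDegree_X_pow n
    · rw [natDegree_X_pow]
      calc natDegree (X + 1 : ℚ[X]) ≤ 1 := by
            simpa using natDegree_add_le (X : ℚ[X]) 1
        _ < n := by omega
  set L := AdjoinRoot f
  set x : L := AdjoinRoot.root f with hx
  set pb := AdjoinRoot.powerBasis hf with hpb
  have hgen : pb.gen = x := AdjoinRoot.powerBasis_gen hf
  have hdim : pb.dim = n := by rw [hpb, AdjoinRoot.powerBasis_dim, hdeg]
  have hminpoly : minpoly ℚ x = f := by
    erw [hx, AdjoinRoot.minpoly_root hf, hmonic.leadingCoeff]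
    simp
  haveI : Module.Finite ℚ L := pb.finite
  -- the key polynomial relation
  have hroot : x ^ n = x + 1 := by
    have h0 : aeval x (X ^ n - X - 1 : ℚ[X]) = 0 := by
      erw [← hfdef, hx, AdjoinRoot.aeval_eq, AdjoinRoot.mk_self]
    simp only [map_sub, map_pow, aeval_X, map_one] at h0
    linear_combination h0
  -- the derivative at x
  have hderiv : derivative f = C (n : ℚ) * X ^ (n - 1) - 1 := by
    rw [hfdef]
    simp [derivative_X_pow]
  set D : L := aeval x (derivative f) with hD
  have hDval : D = (n : L) * x ^ (n - 1) - 1 := by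
    rw [hD, hderiv]
    simp [map_ofNat]
  -- key multiplicative identity
  have hkey : x * D = algebraMap ℚ L (n - 1) * x + algebraMap ℚ L n := by
    have hxpow : x * x ^ (n - 1) = x ^ n := by
      rw [← pow_succ']
      congr 1
      omega
    rw [hDval]
    have : x * ((n : L) * x ^ (n - 1) - 1) = (n : L) * (x * x ^ (n - 1)) - x := by ring
    rw [this, hxpow, hroot]
    push_cast
    ring
  -- norm of x
  have hnormx : Algebra.norm ℚ x = (-1) ^ (n + 1) := by
    have := Algebra.PowerBasis.norm_gen_eq_coeff_zero_minpoly pb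
    erw [hgen, hdim, hminpoly] at this
    have hc : f.coeff 0 = -1 := by
      rw [hfdef]
      simp [coeff_X_pow]
      omega
    erw [this, hc]
    ring
  -- norm of (n-1) x + n
  have hn1 : ((n : ℚ) - 1) ≠ 0 := by
    have : (2 : ℚ) ≤ n := by exact_mod_cast hn
    intro h; nlinarith
  set c : ℚ := n / (n - 1) with hc
  have hsplit : algebraMap ℚ L (n - 1) * x + algebraMap ℚ L n
      = algebraMap ℚ L ((n : ℚ) - 1) * (x + algebraMap ℚ L c) := by
    rw [mul_add, ← map_mul, hc, mul_div_cancel₀ _ hn1]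
  have hnormlin : Algebra.norm ℚ (x + algebraMap ℚ L c) = (-1) ^ n * f.eval (-c) := by
    have := norm_gen_add_algebraMap pb c
    erw [hgen, hdim, hminpoly] at this
    exact this
  have hfinrank : Module.finrank ℚ L = n := by
    show Module.finrank ℚ (AdjoinRoot f) = n
    rw [pb.finrank, hdim]
  -- combine via multiplicativity
  have hmul : Algebra.norm ℚ x * Algebra.norm ℚ D
      = ((n : ℚ) - 1) ^ n * ((-1) ^ n * f.eval (-c)) := by
    rw [← map_mul, hkey, hsplit, map_mul, Algebra.norm_algebraMap, hfinrank, hnormlin]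
  -- evaluate f at -c
  have h1 : ((n : ℚ) - 1) * c = (n : ℚ) := mul_div_cancel₀ _ hn1
  have key1 : ((n:ℚ)-1)^n * (-c)^n = (-1:ℚ)^n * (n:ℚ)^n := by
    rw [← mul_pow, show ((n:ℚ)-1) * -c = -(n:ℚ) from by linear_combination -h1, neg_pow]
  have key2 : ((n:ℚ)-1)^n * (c - 1) = ((n:ℚ)-1)^(n-1) := by
    rw [show ((n:ℚ)-1)^n = ((n:ℚ)-1)^(n-1) * ((n:ℚ)-1) from by
      rw [← pow_succ, show n-1+1 = n from by omega]]
    linear_combination ((n:ℚ)-1)^(n-1) * h1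
  have hsq : ((-1:ℚ))^n * (-1)^n = 1 := by rw [← mul_pow]; norm_num
  have h4 : ((-1:ℚ))^(n+1) * (-1)^(n+1) = 1 := by rw [← mul_pow]; norm_num
  have hodd : ((-1:ℚ))^(n-1) * (-1) = (-1:ℚ)^n := by
    rw [← pow_succ, show n-1+1 = n from by omega]
  have e3 : ((1:ℚ)-(n:ℚ))^(n-1) = (-1:ℚ)^(n-1) * ((n:ℚ)-1)^(n-1) := by
    rw [show (1:ℚ)-(n:ℚ) = -(((n:ℚ))-1) from by ring, neg_pow]
  have hfeval : ((n : ℚ) - 1) ^ n * ((-1) ^ n * f.eval (-c)) =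
      (-1) ^ (n + 1) * ((-1) ^ (n + 1) * ((n : ℚ) ^ n - (1 - (n : ℚ)) ^ (n - 1))) := by
    have heval : f.eval (-c) = (-c) ^ n - (-c) - 1 := by
      simp only [hfdef, eval_sub, eval_pow, eval_X, eval_one]
    rw [heval]
    calc ((n:ℚ)-1)^n * ((-1)^n * ((-c)^n - (-c) - 1))
        = (-1:ℚ)^n * (((n:ℚ)-1)^n * (-c)^n)
            + (-1:ℚ)^n * (((n:ℚ)-1)^n * (c - 1)) := by ring
      _ = (-1:ℚ)^n * ((-1:ℚ)^n * (n:ℚ)^n) + (-1:ℚ)^n * ((n:ℚ)-1)^(n-1) := by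
            rw [key1, key2]
      _ = ((-1:ℚ)^n * (-1:ℚ)^n) * (n:ℚ)^n + (-1:ℚ)^n * ((n:ℚ)-1)^(n-1) := by ring
      _ = (n:ℚ)^n + (-1:ℚ)^n * ((n:ℚ)-1)^(n-1) := by rw [hsq, one_mul]
      _ = (n:ℚ)^n - (-1:ℚ)^(n-1) * ((n:ℚ)-1)^(n-1) := by rw [← hodd]; ring
      _ = (n:ℚ)^n - ((1:ℚ)-(n:ℚ))^(n-1) := by rw [e3]
      _ = ((-1:ℚ)^(n+1) * (-1:ℚ)^(n+1)) * ((n:ℚ)^n - ((1:ℚ)-(n:ℚ))^(n-1)) := by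
            rw [h4, one_mul]
      _ = (-1:ℚ)^(n+1) * ((-1:ℚ)^(n+1) * ((n:ℚ)^n - ((1:ℚ)-(n:ℚ))^(n-1))) := by ring
  -- solve for norm D
  have hnormD : Algebra.norm ℚ D
      = (-1) ^ (n + 1) * ((n : ℚ) ^ n - (1 - (n : ℚ)) ^ (n - 1)) := by
    have h5 := hmul
    rw [hnormx, hfeval] at h5
    exact mul_left_cancel₀ (by positivity) h5
  -- discriminant formula
  have hdiscr := Algebra.discr_powerBasis_eq_norm (pb := pb) (K := ℚ)
  erw [hgen, hminpoly, ← hD, hnormD, show Module.finrank ℚ (AdjoinRoot f) = n from hfinrank] at hdiscr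
  rw [hdiscr, ← mul_assoc, ← pow_add]
  obtain ⟨m, rfl⟩ : ∃ m, n = m + 2 := ⟨n - 2, by omega⟩
  have hexp : (m + 2) * (m + 2 - 1) / 2 + (m + 2 + 1)
      = (m + 2 - 1) * (m + 2 - 2) / 2 + 2 * (m + 2) := by
    rw [show m + 2 - 1 = m + 1 from rfl, show m + 2 - 2 = m from rfl,
      show (m + 2) * (m + 1) = (m + 1) * m + 2 * (m + 1) from by ring,
      Nat.add_mul_div_left _ _ (by norm_num : (0:ℕ) < 2)]
    omega
  rw [hexp, pow_add, pow_mul]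
  norm_num
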